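/- Let L > 0 and let λ̃ ∈ ℂ be such that the polynomial μ³ + μ + λ̃ has a root of multiplicity at least two (i.e., there exists μ₀ ∈ ℂ with μ₀³ + μ₀ + λ̃ = 0 and 3μ₀² + 1 = 0). Suppose θ : ℝ → ℂ satisfies the KdV spectral ODE with parameter λ̃ on [0,L] and the boundary conditions θ(0) = 0, θ'(0) = 0, θ'(L) = 0, and θ''(L) = 0. Then θ(x) = 0 for all x ∈ [0,L]. -/

import Mathlib

/-- A function `φ : ℝ → ℂ` satisfies the KdV spectral ODE with parameter `lam` on `[0, L]`:
it is three times continuously differentiable and `lam·φ + φ' + φ''' = 0` on `[0, L]`. -/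
def KdVSpectralODE (lam : ℂ) (L : ℝ) (φ : ℝ → ℂ) : Prop :=
  ContDiff ℝ 3 φ ∧
    ∀ x ∈ Set.Icc (0 : ℝ) L, lam * φ x + deriv φ x + iteratedDeriv 3 φ x = 0

open Complex

noncomputable def kdvF (μ c : ℂ) : ℝ → ℂ × ℂ × ℂ := fun x =>
  ((c/3) * ((1 - 3*μ*x) * Complex.exp (μ*x) - Complex.exp (-(2*μ*x))),
   (c/3) * (((x : ℂ) - 2*μ) * Complex.exp (μ*x) + 2*μ * Complex.exp (-(2*μ*x))),
   (c/3) * ((5/3 + μ*x) * Complex.exp (μ*x) + (4/3) * Complex.exp (-(2*μ*x))))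

lemma kdvF_hasDerivAt (μ c lam : ℂ) (hμ : 3*μ^2+1 = 0) (hlam : μ^3+μ+lam = 0) (x : ℝ) :
    HasDerivAt (kdvF μ c)
      ((kdvF μ c x).2.1, (kdvF μ c x).2.2,
        -(lam * (kdvF μ c x).1) - (kdvF μ c x).2.1) x := by
  have hid : HasDerivAt (fun x : ℝ => (x : ℂ)) 1 x := by
    exact Complex.ofRealCLM.hasDerivAt (x := x)
  have hmul : HasDerivAt (fun x : ℝ => (μ * x : ℂ)) μ x := by
    simpa using hid.const_mul μ
  have hmul2 : HasDerivAt (fun x : ℝ => (-(2*μ*x) : ℂ)) (-(2*μ)) x := by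
    have h := (hid.const_mul (2*μ)).neg; rw [mul_one] at h; exact h
  have he1 : HasDerivAt (fun x : ℝ => Complex.exp (μ*x)) (Complex.exp (μ*x) * μ) x := hmul.cexp
  have he2 : HasDerivAt (fun x : ℝ => Complex.exp (-(2*μ*x)))
      (Complex.exp (-(2*μ*x)) * (-(2*μ))) x := hmul2.cexp
  refine HasDerivAt.prodMk ?_ (HasDerivAt.prodMk ?_ ?_)
  · have : HasDerivAt (fun x : ℝ => (c/3) * ((1 - 3*μ*x) * Complex.exp (μ*x) - Complex.exp (-(2*μ*x))))
        ((c/3) * (((-(3*μ*1)) * Complex.exp (μ*x) + (1 - 3*μ*x) * (Complex.exp (μ*x) * μ))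
          - Complex.exp (-(2*μ*x)) * (-(2*μ)))) x := by
      exact ((((hid.const_mul (3*μ)).const_sub 1).mul he1).sub he2).const_mul (c/3)
    convert this using 1
    show (c/3) * (((x : ℂ) - 2*μ) * Complex.exp (μ*x) + 2*μ * Complex.exp (-(2*μ*x))) = _
    linear_combination ((c/3) * (x : ℂ) * Complex.exp (μ*x)) * hμ
    rfl
  · have : HasDerivAt (fun x : ℝ => (c/3) * (((x:ℂ) - 2*μ) * Complex.exp (μ*x) + 2*μ * Complex.exp (-(2*μ*x))))
        ((c/3) * ((1 * Complex.exp (μ*x) + ((x:ℂ) - 2*μ) * (Complex.exp (μ*x) * μ))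
          + 2*μ * (Complex.exp (-(2*μ*x)) * (-(2*μ))))) x := by
      exact (((hid.sub_const (2*μ)).mul he1).add (he2.const_mul (2*μ))).const_mul (c/3)
    convert this using 1
    show (c/3) * ((5/3 + μ*x) * Complex.exp (μ*x) + (4/3) * Complex.exp (-(2*μ*x))) = _
    linear_combination ((c/3) * ((2/3 : ℂ) * Complex.exp (μ*x) + (4/3 : ℂ) * Complex.exp (-(2*μ*x)))) * hμ
    rfl
  · have : HasDerivAt (fun x : ℝ => (c/3) * ((5/3 + μ*x) * Complex.exp (μ*x) + (4/3) * Complex.exp (-(2*μ*x))))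
        ((c/3) * ((μ * Complex.exp (μ*x) + (5/3 + μ*x) * (Complex.exp (μ*x) * μ))
          + (4/3) * (Complex.exp (-(2*μ*x)) * (-(2*μ))))) x := by
      exact ((((hmul).const_add (5/3)).mul he1).add (he2.const_mul (4/3))).const_mul (c/3)
    convert this using 1
    show -(lam * ((c/3) * ((1 - 3*μ*x) * Complex.exp (μ*x) - Complex.exp (-(2*μ*x)))))
        - (c/3) * (((x:ℂ) - 2*μ) * Complex.exp (μ*x) + 2*μ * Complex.exp (-(2*μ*x))) = _
    have h2 : lam = -μ^3 - μ := by linear_combination hlam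
    subst h2
    linear_combination ((c/3) * ((-(x:ℂ)*μ^2 + μ/3 - (x:ℂ)) * Complex.exp (μ*x)
      - (μ/3) * Complex.exp (-(2*μ*x)))) * hμ
    rfl

set_option maxHeartbeats 2000000 in
theorem stmt12 (L : ℝ) (hL : 0 < L) (lam : ℂ)
    (hroot : ∃ μ₀ : ℂ, μ₀ ^ 3 + μ₀ + lam = 0 ∧ 3 * μ₀ ^ 2 + 1 = 0)
    (θ : ℝ → ℂ) (hode : KdVSpectralODE lam L θ)
    (hb0 : θ 0 = 0) (hb1 : deriv θ 0 = 0) (hb2 : deriv θ L = 0)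
    (hb3 : iteratedDeriv 2 θ L = 0) :
    ∀ x ∈ Set.Icc (0 : ℝ) L, θ x = 0 := by
  obtain ⟨μ, hlam, hμ⟩ := hroot
  obtain ⟨hsm, hODE⟩ := hode
  -- differentiability chain
  rw [show (3 : WithTop ℕ∞) = 2 + 1 by norm_num, contDiff_succ_iff_deriv] at hsm
  obtain ⟨hd0, -, h2⟩ := hsm
  rw [show (2 : WithTop ℕ∞) = 1 + 1 by norm_num, contDiff_succ_iff_deriv] at h2
  obtain ⟨hd1, -, h1⟩ := h2
  have hd2 : Differentiable ℝ (deriv (deriv θ)) := h1.differentiable (by norm_num)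
  have hiter3 : iteratedDeriv 3 θ = deriv (deriv (deriv θ)) := by
    rw [show (3:ℕ) = 2+1 from rfl, iteratedDeriv_succ, show (2:ℕ) = 1+1 from rfl,
      iteratedDeriv_succ, iteratedDeriv_one]
  have hiter2 : iteratedDeriv 2 θ = deriv (deriv θ) := by
    rw [show (2:ℕ) = 1+1 from rfl, iteratedDeriv_succ, iteratedDeriv_one]
  -- the linear vector field
  set p1 : (ℂ × ℂ × ℂ) →L[ℂ] ℂ := ContinuousLinearMap.fst ℂ ℂ (ℂ × ℂ) with hp1
  set q : (ℂ × ℂ × ℂ) →L[ℂ] ℂ × ℂ := ContinuousLinearMap.snd ℂ ℂ (ℂ × ℂ) with hq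
  set p2 : (ℂ × ℂ × ℂ) →L[ℂ] ℂ := (ContinuousLinearMap.fst ℂ ℂ ℂ).comp q with hp2
  set p3 : (ℂ × ℂ × ℂ) →L[ℂ] ℂ := (ContinuousLinearMap.snd ℂ ℂ ℂ).comp q with hp3
  set A : (ℂ × ℂ × ℂ) →L[ℂ] (ℂ × ℂ × ℂ) := p2.prod (p3.prod (-(lam • p1) - p2)) with hA
  have hAapp : ∀ p : ℂ × ℂ × ℂ, A p = (p.2.1, p.2.2, -(lam * p.1) - p.2.1) := by
    intro p; simp [hA, hp1, hp2, hp3, hq]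
  set c : ℂ := deriv (deriv θ) 0 with hc
  set f : ℝ → ℂ × ℂ × ℂ := fun t => (θ t, deriv θ t, deriv (deriv θ) t) with hf
  set g : ℝ → ℂ × ℂ × ℂ := kdvF μ c with hg
  have hgdiff : ∀ t : ℝ, HasDerivAt g (A (g t)) t := by
    intro t
    rw [hAapp]
    exact kdvF_hasDerivAt μ c lam hμ hlam t
  have hfdiff : ∀ t ∈ Set.Icc (0:ℝ) L, HasDerivAt f (A (f t)) t := by
    intro t ht
    rw [hAapp]
    have hode_t := hODE t ht
    rw [hiter3] at hode_t
    have h3' : deriv (deriv (deriv θ)) t = -(lam * θ t) - deriv θ t := by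
      linear_combination hode_t
    refine HasDerivAt.prodMk (hd0 t).hasDerivAt (HasDerivAt.prodMk (hd1 t).hasDerivAt ?_)
    rw [show -(lam * (f t).1) - (f t).2.1 = deriv (deriv (deriv θ)) t from by rw [h3'],]
    exact (hd2 t).hasDerivAt
  have heq : Set.EqOn f g (Set.Icc 0 L) := by
    apply ODE_solution_unique_of_mem_Icc_right (v := fun _ : ℝ => ⇑A)
      (s := fun _ => Set.univ) (K := ‖A‖₊)
    · intro t _; exact A.lipschitz.lipschitzOnWith
    · exact Continuous.continuousOn (hd0.continuous.prodMk (hd1.continuous.prodMk hd2.continuous))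
    · intro t ht
      exact (hfdiff t ⟨ht.1, ht.2.le⟩).hasDerivWithinAt
    · intro t _; trivial
    · exact Continuous.continuousOn
        (continuous_iff_continuousAt.2 fun t => (hgdiff t).continuousAt)
    · intro t _; exact (hgdiff t).hasDerivWithinAt
    · intro t _; trivial
    · -- initial condition
      have : f 0 = (0, 0, c) := by
        simp [hf, hb0, hb1, hc]
      rw [this]
      have : g 0 = (0, 0, c) := by
        simp only [hg, kdvF, Complex.ofReal_zero, mul_zero, neg_zero, Complex.exp_zero]
        refine Prod.ext (by ring_nf) (Prod.ext (by ring_nf) (by ring_nf))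
      rw [this]
  -- evaluate at L
  have hLmem : L ∈ Set.Icc (0:ℝ) L := ⟨hL.le, le_refl L⟩
  have hE := heq hLmem
  have hE1 : (c/3) * (((L:ℂ) - 2*μ) * Complex.exp (μ*L) + 2*μ * Complex.exp (-(2*μ*L))) = 0 := by
    have := congrArg (Prod.fst ∘ Prod.snd) hE
    simpa [hf, hg, kdvF, hb2] using this.symm
  have hE2 : (c/3) * ((5/3 + μ*L) * Complex.exp (μ*L) + (4/3) * Complex.exp (-(2*μ*L))) = 0 := by
    have := congrArg (Prod.snd ∘ Prod.snd) hE
    rw [hiter2] at hb3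
    simpa [hf, hg, kdvF, hb3] using this.symm
  have hkey : (c * ((L:ℂ) - 3*μ)) * Complex.exp (μ*L) = 0 := by
    linear_combination 2*hE1 - 3*μ*hE2 + (c*(L:ℂ)/3)*Complex.exp (μ*L)*hμ
  have hc0 : c = 0 := by
    rcases mul_eq_zero.1 hkey with h | h
    · rcases mul_eq_zero.1 h with h' | h'
      · exact h'
      · exfalso
        have hL2 : ((L^2 + 3 : ℝ) : ℂ) = 0 := by
          push_cast
          linear_combination 3*hμ + ((L:ℂ) + 3*μ)*h'
        have : (L^2 + 3 : ℝ) = 0 := by exact_mod_cast hL2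
        nlinarith
    · exact absurd h (Complex.exp_ne_zero _)
  intro x hx
  have := congrArg Prod.fst (heq hx)
  simp only [hf, hg, kdvF, hc0] at this
  simpa using this
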